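/- Let T > 0, let H be a real Hilbert space, X = H × H, and let J be the symplectic operator J(p,q) = (−q, p) on X. Then for every absolutely continuous path u : [0,T] → X with u̇ ∈ L²(0,T;X), one has | ∫₀ᵀ ⟨J u̇(t), u(t)⟩ dt + ⟨J (u(0)+u(T))/2, u(T) − u(0)⟩ | ≤ (T/2) ∫₀ᵀ ‖u̇(t)‖² dt. -/

import Mathlib

open MeasureTheory Set Filter Topology RealInnerProductSpace

noncomputable section

/-- `u` is an absolutely continuous path on `[0,T]` with derivative `u'` in `L²(0,T;F)`. -/
def InA2 {F : Type*} [NormedAddCommGroup F] [NormedSpace ℝ F]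
    (T : ℝ) (u u' : ℝ → F) : Prop :=
  MemLp u' 2 (volume.restrict (Set.Ioc (0:ℝ) T)) ∧
  ∀ t ∈ Set.Icc (0:ℝ) T, u t = u 0 + ∫ s in (0:ℝ)..t, u' s

section Abstract

variable {E : Type*} [NormedAddCommGroup E] [InnerProductSpace ℝ E]

lemma abstract_symplectic_estimate [CompleteSpace E]
    (T : ℝ) (hT : 0 < T) (f f' : ℝ → E) (hf : InA2 T f f')
    (𝒥 : E →L[ℝ] E) (h𝒥n : ∀ x : E, ‖𝒥 x‖ = ‖x‖)
    (h𝒥a : ∀ a b : E, ⟪𝒥 a, b⟫ = -⟪𝒥 b, a⟫) :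
    |(∫ t in Set.Ioc (0:ℝ) T, ⟪𝒥 (f' t), f t⟫) +
        ⟪𝒥 ((2:ℝ)⁻¹ • (f 0 + f T)), f T - f 0⟫| ≤
      T / 2 * ∫ t in Set.Ioc (0:ℝ) T, ‖f' t‖^2 := by
  obtain ⟨hL2, hAC⟩ := hf
  set μr := volume.restrict (Set.Ioc (0:ℝ) T) with hμr
  haveI : IsFiniteMeasure μr := by
    constructor
    rw [hμr, Measure.restrict_apply_univ, Real.volume_Ioc]
    exact ENNReal.ofReal_lt_top
  have hint : IntegrableOn f' (Set.Ioc (0:ℝ) T) :=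
    hL2.integrable one_le_two
  have hII : ∀ a b : ℝ, 0 ≤ a → a ≤ b → b ≤ T → IntervalIntegrable f' volume a b := by
    intro a b ha hab hbT
    rw [intervalIntegrable_iff_integrableOn_Ioc_of_le hab]
    exact hint.mono_set (Set.Ioc_subset_Ioc ha hbT)
  set m := (2:ℝ)⁻¹ • (f 0 + f T) with hm
  set C := ∫ t in Set.Ioc (0:ℝ) T, ‖f' t‖ with hC
  have hC0 : 0 ≤ C := integral_nonneg fun t => norm_nonneg _
  -- pointwise bound on ‖f t - m‖
  have hdist : ∀ t ∈ Set.Icc (0:ℝ) T, ‖f t - m‖ ≤ C / 2 := by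
    intro t ht
    have h1 : IntervalIntegrable f' volume 0 t := hII 0 t le_rfl ht.1 ht.2
    have h2 : IntervalIntegrable f' volume t T := hII t T ht.1 ht.2 le_rfl
    have hsplit : (∫ s in (0:ℝ)..t, f' s) + ∫ s in t..T, f' s = ∫ s in (0:ℝ)..T, f' s :=
      intervalIntegral.integral_add_adjacent_intervals h1 h2
    have hft : f t - m = (2:ℝ)⁻¹ • ((∫ s in (0:ℝ)..t, f' s) - ∫ s in t..T, f' s) := by
      rw [hm, hAC t ht, hAC T ⟨hT.le, le_rfl⟩, ← hsplit]
      module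
    have hnt : ‖∫ s in (0:ℝ)..t, f' s‖ ≤ ∫ s in (0:ℝ)..t, ‖f' s‖ :=
      intervalIntegral.norm_integral_le_integral_norm ht.1
    have hnT : ‖∫ s in t..T, f' s‖ ≤ ∫ s in t..T, ‖f' s‖ :=
      intervalIntegral.norm_integral_le_integral_norm ht.2
    have hsplitn : (∫ s in (0:ℝ)..t, ‖f' s‖) + ∫ s in t..T, ‖f' s‖ = C := by
      rw [hC, ← intervalIntegral.integral_of_le hT.le]
      exact intervalIntegral.integral_add_adjacent_intervals h1.norm h2.norm
    calc ‖f t - m‖ = (2:ℝ)⁻¹ * ‖(∫ s in (0:ℝ)..t, f' s) - ∫ s in t..T, f' s‖ := by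
          rw [hft, norm_smul]; norm_num
      _ ≤ (2:ℝ)⁻¹ * (‖∫ s in (0:ℝ)..t, f' s‖ + ‖∫ s in t..T, f' s‖) := by
          gcongr; exact norm_sub_le _ _
      _ ≤ (2:ℝ)⁻¹ * ((∫ s in (0:ℝ)..t, ‖f' s‖) + ∫ s in t..T, ‖f' s‖) := by gcongr
      _ = C / 2 := by rw [hsplitn]; ring
  -- measurability of f on Ioc
  have hfm : AEStronglyMeasurable f μr := by
    have hcont : ContinuousOn (fun t => f 0 + ∫ s in (0:ℝ)..t, f' s) (Set.Icc 0 T) := by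
      rw [show Set.Icc (0:ℝ) T = Set.uIcc (0:ℝ) T from (Set.uIcc_of_le hT.le).symm]
      exact continuousOn_const.add (intervalIntegral.continuousOn_primitive_interval'
        (hII 0 T le_rfl hT.le le_rfl) Set.left_mem_uIcc)
    have : AEStronglyMeasurable (fun t => f 0 + ∫ s in (0:ℝ)..t, f' s) μr :=
      ((hcont.mono (Set.Ioc_subset_Icc_self)).aestronglyMeasurable measurableSet_Ioc)
    refine this.congr ?_
    rw [hμr]
    filter_upwards [ae_restrict_mem measurableSet_Ioc] with t ht
    exact (hAC t ⟨ht.1.le, ht.2⟩).symm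
  have hf'm : AEStronglyMeasurable f' μr := hL2.aestronglyMeasurable
  have h𝒥f'm : AEStronglyMeasurable (fun t => 𝒥 (f' t)) μr :=
    𝒥.continuous.comp_aestronglyMeasurable hf'm
  -- integrability of the inner products
  have hbd : ∀ᵐ t ∂μr, ‖⟪𝒥 (f' t), f t - m⟫‖ ≤ ‖f' t‖ * (C / 2) := by
    rw [hμr]
    filter_upwards [ae_restrict_mem measurableSet_Ioc] with t ht
    calc ‖⟪𝒥 (f' t), f t - m⟫‖ ≤ ‖𝒥 (f' t)‖ * ‖f t - m‖ := norm_inner_le_norm _ _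
      _ ≤ ‖f' t‖ * (C / 2) := by
          rw [h𝒥n]; gcongr; exact hdist t ⟨ht.1.le, ht.2⟩
  have hI : Integrable (fun t => ⟪𝒥 (f' t), f t - m⟫) μr := by
    refine Integrable.mono' (hint.norm.mul_const (C / 2)) ?_ hbd
    exact h𝒥f'm.inner (hfm.sub aestronglyMeasurable_const)
  have hIm : Integrable (fun t => ⟪𝒥 (f' t), m⟫) μr := by
    have : Integrable (fun t => ((innerSL ℝ m).comp 𝒥) (f' t)) μr :=
      ((innerSL ℝ m).comp 𝒥).integrable_comp hint
    refine this.congr (Eventually.of_forall fun t => ?_)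
    simp [real_inner_comm]
  have hIf : Integrable (fun t => ⟪𝒥 (f' t), f t⟫) μr := by
    have : (fun t => ⟪𝒥 (f' t), f t⟫) =
        fun t => ⟪𝒥 (f' t), f t - m⟫ + ⟪𝒥 (f' t), m⟫ := by
      funext t; rw [← inner_add_right, sub_add_cancel]
    rw [this]; exact hI.add hIm
  -- the boundary term identity
  have hFT : f T - f 0 = ∫ t in Set.Ioc (0:ℝ) T, f' t := by
    rw [hAC T ⟨hT.le, le_rfl⟩, ← intervalIntegral.integral_of_le hT.le]
    abel
  have hbdy : ∫ t in Set.Ioc (0:ℝ) T, ⟪𝒥 (f' t), m⟫ = -⟪𝒥 m, f T - f 0⟫ := by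
    have h1 : ∫ t in Set.Ioc (0:ℝ) T, ⟪𝒥 (f' t), m⟫
        = ((innerSL ℝ m).comp 𝒥) (∫ t in Set.Ioc (0:ℝ) T, f' t) := by
      rw [← ContinuousLinearMap.integral_comp_comm _ hint]
      refine integral_congr_ae (Eventually.of_forall fun t => ?_)
      simp [real_inner_comm]
    rw [h1, ← hFT]
    simp only [ContinuousLinearMap.coe_comp', Function.comp_apply, innerSL_apply_apply]
    rw [real_inner_comm, h𝒥a]
  -- combine
  have hsum : (∫ t in Set.Ioc (0:ℝ) T, ⟪𝒥 (f' t), f t⟫) + ⟪𝒥 m, f T - f 0⟫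
      = ∫ t in Set.Ioc (0:ℝ) T, ⟪𝒥 (f' t), f t - m⟫ := by
    have : ∫ t in Set.Ioc (0:ℝ) T, ⟪𝒥 (f' t), f t - m⟫
        = (∫ t in Set.Ioc (0:ℝ) T, ⟪𝒥 (f' t), f t⟫)
          - ∫ t in Set.Ioc (0:ℝ) T, ⟪𝒥 (f' t), m⟫ := by
      rw [← integral_sub hIf hIm]
      refine integral_congr_ae (Eventually.of_forall fun t => ?_)
      exact inner_sub_right _ _ _
    rw [this, hbdy]; ring
  rw [hsum]
  -- Cauchy-Schwarz for C
  have hN2 : Integrable (fun t => ‖f' t‖^2) μr := by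
    have := hL2.integrable_norm_rpow two_ne_zero ENNReal.ofNat_ne_top
    refine this.congr (Eventually.of_forall fun t => ?_)
    norm_num [Real.rpow_natCast]
  have hN20 : 0 ≤ ∫ t in Set.Ioc (0:ℝ) T, ‖f' t‖^2 :=
    integral_nonneg fun t => sq_nonneg _
  have hCS : C^2 ≤ T * ∫ t in Set.Ioc (0:ℝ) T, ‖f' t‖^2 := by
    have h22 : (2:ℝ).HolderConjugate 2 := by
      constructor <;> norm_num
    have hg1 : MemLp (fun _ : ℝ => (1:ℝ)) (ENNReal.ofReal 2) μr := memLp_const 1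
    have hf2 : MemLp (fun t => ‖f' t‖) (ENNReal.ofReal 2) μr := by
      have : (ENNReal.ofReal 2) = 2 := by norm_num
      rw [this]; exact hL2.norm
    have := integral_mul_le_Lp_mul_Lq_of_nonneg h22
      (Eventually.of_forall fun t => norm_nonneg (f' t))
      (Eventually.of_forall fun _ => zero_le_one) hf2 hg1
    simp only [mul_one, Real.rpow_two, one_pow] at this
    have hμT : ∫ _ : ℝ, (1:ℝ) ∂μr = T := by
      simp [hμr, Real.volume_Ioc, sub_zero, ENNReal.toReal_ofReal hT.le, hT.le]
    rw [hμT] at this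
    set N2 := ∫ t in Set.Ioc (0:ℝ) T, ‖f' t‖^2 with hN2d
    have h2 : C^2 ≤ (N2 ^ (1/2:ℝ) * T ^ (1/2:ℝ))^2 := pow_le_pow_left₀ hC0 this 2
    have h3 : (N2 ^ (1/2:ℝ) * T ^ (1/2:ℝ))^2 = N2 * T := by
      rw [mul_pow, ← Real.rpow_natCast (N2 ^ (1/2:ℝ)) 2, ← Real.rpow_natCast (T ^ (1/2:ℝ)) 2,
        ← Real.rpow_mul hN20, ← Real.rpow_mul hT.le]
      norm_num
    linarith
  have hmain : |∫ t in Set.Ioc (0:ℝ) T, ⟪𝒥 (f' t), f t - m⟫| ≤ C * (C / 2) := by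
    calc |∫ t in Set.Ioc (0:ℝ) T, ⟪𝒥 (f' t), f t - m⟫|
        ≤ ∫ t in Set.Ioc (0:ℝ) T, ‖⟪𝒥 (f' t), f t - m⟫‖ := by
          rw [← Real.norm_eq_abs]; exact norm_integral_le_integral_norm _
      _ ≤ ∫ t in Set.Ioc (0:ℝ) T, ‖f' t‖ * (C / 2) := by
          refine integral_mono_ae hI.norm (hint.norm.mul_const _) hbd
      _ = C * (C / 2) := by rw [integral_mul_const]
  calc |∫ t in Set.Ioc (0:ℝ) T, ⟪𝒥 (f' t), f t - m⟫| ≤ C * (C / 2) := hmain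
    _ = C^2 / 2 := by ring
    _ ≤ (T * ∫ t in Set.Ioc (0:ℝ) T, ‖f' t‖^2) / 2 := by linarith
    _ = T / 2 * ∫ t in Set.Ioc (0:ℝ) T, ‖f' t‖^2 := by ring

end Abstract

variable {H : Type*} [NormedAddCommGroup H] [InnerProductSpace ℝ H]

/-- The symplectic operator `J(p,q) = (-q,p)` on `X = H × H`. -/
def Jmap (a : H × H) : H × H := (-a.2, a.1)

/-- The inner product on `X = H × H`. -/
def pinX (a b : H × H) : ℝ := ⟪a.1, b.1⟫ + ⟪a.2, b.2⟫

/-- The squared norm on `X = H × H`. -/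
def normX2 (a : H × H) : ℝ := ‖a.1‖^2 + ‖a.2‖^2

/-- For every `u ∈ A²_X`,
`|∫₀ᵀ ⟨Ju̇,u⟩ dt + ⟨J(u(0)+u(T))/2, u(T)-u(0)⟩| ≤ (T/2) ∫₀ᵀ ‖u̇‖²`. -/
theorem symplectic_boundary_estimate_general
    [CompleteSpace H]
    (T : ℝ) (hT : 0 < T) (u u' : ℝ → H × H) (hu : InA2 T u u') :
    |(∫ t in Set.Ioc (0:ℝ) T, pinX (Jmap (u' t)) (u t)) +
        pinX (Jmap ((2:ℝ)⁻¹ • (u 0 + u T))) (u T - u 0)| ≤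
      T / 2 * ∫ t in Set.Ioc (0:ℝ) T, normX2 (u' t) := by
  classical
  set e : WithLp 2 (H × H) ≃L[ℝ] H × H := WithLp.prodContinuousLinearEquiv 2 ℝ H H with he
  set JX : (H × H) →L[ℝ] (H × H) :=
    ContinuousLinearMap.prod (-(ContinuousLinearMap.snd ℝ H H)) (ContinuousLinearMap.fst ℝ H H)
    with hJX
  set 𝒥 : WithLp 2 (H × H) →L[ℝ] WithLp 2 (H × H) :=
    (e.symm.toContinuousLinearMap.comp JX).comp e.toContinuousLinearMap with h𝒥
  set F : ℝ → WithLp 2 (H × H) := fun t => e.symm (u t) with hF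
  set F' : ℝ → WithLp 2 (H × H) := fun t => e.symm (u' t) with hF'
  have hJXeq : ∀ a : H × H, JX a = Jmap a := fun a => rfl
  have h𝒥eq : ∀ a : H × H, 𝒥 (e.symm a) = e.symm (Jmap a) := by
    intro a; simp [h𝒥, hJXeq]
  have hinner : ∀ a b : H × H, ⟪e.symm a, e.symm b⟫ = pinX a b := fun a b => rfl
  have hnorm2 : ∀ a : H × H, ‖e.symm a‖^2 = normX2 a := by
    intro a
    rw [WithLp.prod_norm_sq_eq_of_L2]
    rfl
  have h𝒥n : ∀ x : WithLp 2 (H × H), ‖𝒥 x‖ = ‖x‖ := by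
    intro x
    have h1 : 𝒥 x = e.symm (Jmap (e x)) := by
      have := h𝒥eq (e x); rwa [e.symm_apply_apply] at this
    have h2 : ‖𝒥 x‖^2 = ‖x‖^2 := by
      conv_rhs => rw [← e.symm_apply_apply x]
      rw [h1, hnorm2, hnorm2]
      simp only [normX2, Jmap, norm_neg]
      ring
    have h3 := congrArg Real.sqrt h2
    rwa [Real.sqrt_sq (norm_nonneg _), Real.sqrt_sq (norm_nonneg _)] at h3
  have h𝒥a : ∀ a b : WithLp 2 (H × H), ⟪𝒥 a, b⟫ = -⟪𝒥 b, a⟫ := by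
    intro a b
    show pinX (Jmap (e a)) (e b) = -pinX (Jmap (e b)) (e a)
    simp only [pinX, Jmap, inner_neg_left]
    rw [real_inner_comm (e a).2 (e b).1, real_inner_comm (e a).1 (e b).2]
    ring
  have hInA2 : InA2 T F F' := by
    constructor
    · exact e.symm.toContinuousLinearMap.comp_memLp' hu.1
    · intro t ht
      have h0 : (0:ℝ) ≤ t := ht.1
      have hid : ∫ s in (0:ℝ)..t, F' s = e.symm (∫ s in (0:ℝ)..t, u' s) := by
        rw [intervalIntegral.integral_of_le h0, intervalIntegral.integral_of_le h0]
        simp only [hF']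
        exact ContinuousLinearEquiv.integral_comp_comm
          (μ := volume.restrict (Set.Ioc 0 t)) e.symm u'
      rw [hF]
      simp only
      rw [hu.2 t ht, map_add, hid]
  have := abstract_symplectic_estimate T hT F F' hInA2 𝒥 h𝒥n h𝒥a
  have e1 : ∀ t, ⟪𝒥 (F' t), F t⟫ = pinX (Jmap (u' t)) (u t) := by
    intro t; rw [hF, hF']; simp only [h𝒥eq]; exact hinner _ _
  have e2 : ⟪𝒥 ((2:ℝ)⁻¹ • (F 0 + F T)), F T - F 0⟫
      = pinX (Jmap ((2:ℝ)⁻¹ • (u 0 + u T))) (u T - u 0) := by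
    have : (2:ℝ)⁻¹ • (F 0 + F T) = e.symm ((2:ℝ)⁻¹ • (u 0 + u T)) := by
      rw [hF]; simp only [map_add, _root_.map_smul]
    rw [this, h𝒥eq]
    have : F T - F 0 = e.symm (u T - u 0) := by rw [hF]; simp [map_sub]
    rw [this]; exact hinner _ _
  have e3 : ∀ t, ‖F' t‖^2 = normX2 (u' t) := fun t => hnorm2 _
  simp only [e1, e2, e3] at this
  exact this
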